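/- Let F₁, F₂ : ℝ^{m+1} → ℂ be homogeneous polynomials of degree d with ΔF₁ = ΔF₂ = 0 and (∇ₓF₁)ᵀ∇ₓF₂ = 0 for all x. Then the restrictions f_i = F_i|_{S^m} satisfy Δ_{S^m}f_i = −d(d+m−1) f_i and g_ℂ(∇^{S^m}f₁, ∇^{S^m}f₂) = −d² f₁ f₂. -/

import Mathlib

open MvPolynomial

/-- Evaluation of a complex polynomial at a real point. -/
noncomputable def pev {n : ℕ} (F : MvPolynomial (Fin n) ℂ) (x : Fin n → ℝ) : ℂ :=
  eval (fun j => (x j : ℂ)) F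

/-- The (complexified) Euclidean gradient of a polynomial at a real point. -/
noncomputable def pgrad {n : ℕ} (F : MvPolynomial (Fin n) ℂ) (x : Fin n → ℝ) : Fin n → ℂ :=
  fun i => pev (pderiv i F) x

/-- Spherical gradient of `F|_{S}` at a unit point: tangential projection of the gradient. -/
noncomputable def ptang {n : ℕ} (F : MvPolynomial (Fin n) ℂ) (x : Fin n → ℝ) : Fin n → ℂ :=
  fun i => pgrad F x i - (∑ j, (x j : ℂ) * pgrad F x j) * (x i : ℂ)

/-- The Euclidean Laplacian of a function `ℝ^n → ℂ`. -/
noncomputable def lap {n : ℕ} (F : (Fin n → ℝ) → ℂ) (x : Fin n → ℝ) : ℂ :=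
  ∑ i, fderiv ℝ (fun y => fderiv ℝ F y (Pi.single i 1)) x (Pi.single i 1)

/-- The degree-zero homogeneous extension of `F|_{S}` to `ℝ^n \ {0}`; the Laplace–Beltrami
operator on the unit sphere is given by `Δ_{S} (F|_S) (p) = Δ (ext F) (p)` for `‖p‖ = 1`. -/
noncomputable def ext {n : ℕ} (F : MvPolynomial (Fin n) ℂ) : (Fin n → ℝ) → ℂ :=
  fun x => pev F (fun j => (Real.sqrt (∑ l, x l ^ 2))⁻¹ * x j)


lemma deg_eq {n d : ℕ} {F : MvPolynomial (Fin n) ℂ} (h : F.IsHomogeneous d)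
    {v : Fin n →₀ ℕ} (hv : v ∈ F.support) : ∑ i, v i = d := by
  have hw := h (mem_support_iff.mp hv)
  rw [Finsupp.weight_apply, Finsupp.sum] at hw
  simp only [Pi.one_apply, smul_eq_mul, mul_one] at hw
  rw [← hw, Finset.sum_subset (Finset.subset_univ v.support)]
  intro x _ hx
  simpa using Finsupp.notMem_support_iff.mp hx

lemma prod_ext {n : ℕ} (v : Fin n →₀ ℕ) (z : Fin n → ℂ) :
    (v.prod fun i k => z i ^ k) = ∏ a, z a ^ v a := by
  rw [Finsupp.prod]
  refine Finset.prod_subset (Finset.subset_univ _) fun x _ hx => by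
    simp [Finsupp.notMem_support_iff.mp hx]

lemma eval_mul_smul {n d : ℕ} {F : MvPolynomial (Fin n) ℂ} (h : F.IsHomogeneous d)
    (c : ℂ) (y : Fin n → ℂ) :
    eval (fun j => c * y j) F = c ^ d * eval y F := by
  conv_lhs => rw [F.as_sum]
  conv_rhs => rw [F.as_sum]
  rw [map_sum, map_sum, Finset.mul_sum]
  refine Finset.sum_congr rfl fun v hv => ?_
  rw [eval_monomial, eval_monomial, prod_ext, prod_ext]
  have : (∏ a, (c * y a) ^ v a) = c ^ d * ∏ a, y a ^ v a := by
    rw [← deg_eq h hv, ← Finset.prod_pow_eq_pow_sum, ← Finset.prod_mul_distrib]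
    exact Finset.prod_congr rfl fun i _ => mul_pow _ _ _
  rw [this]; ring

lemma euler_eval {n d : ℕ} {F : MvPolynomial (Fin n) ℂ} (h : F.IsHomogeneous d)
    (y : Fin n → ℂ) :
    ∑ i, y i * eval y (pderiv i F) = (d : ℂ) * eval y F := by
  conv_lhs => rw [F.as_sum]
  conv_rhs => rw [F.as_sum]
  simp only [map_sum, Finset.mul_sum]
  rw [Finset.sum_comm]
  refine Finset.sum_congr rfl fun v hv => ?_
  simp only [pderiv_monomial, eval_monomial]
  have key : ∀ i : Fin n, y i * (coeff v F * ((v i : ℕ) : ℂ) *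
      ((v - Finsupp.single i 1).prod fun j k => y j ^ k)) =
      ((v i : ℕ) : ℂ) * (coeff v F * v.prod fun j k => y j ^ k) := by
    intro i
    rcases Nat.eq_zero_or_pos (v i) with h0 | hpos
    · simp [h0]
    · rw [prod_ext, prod_ext]
      set w : Fin n →₀ ℕ := v - Finsupp.single i 1 with hw
      have hfac : ∀ a : Fin n, y a ^ v a =
          (if a = i then y i else 1) * y a ^ (w a) := by
        intro a
        have hwa : w a = v a - (if a = i then 1 else 0) := by
          rw [hw]; simp [Finsupp.single_apply]
          rcases eq_or_ne a i with rfl | hne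
          · simp
          · simp [hne, Ne.symm hne]
        rcases eq_or_ne a i with rfl | hne
        · simp only [if_true]
          rw [hwa, if_pos rfl]
          obtain ⟨k, hk⟩ : ∃ k, v a = k + 1 := ⟨v a - 1, by omega⟩
          rw [hk, Nat.add_sub_cancel, pow_succ]
          ring
        · simp [hwa, hne]
      rw [Finset.prod_congr rfl (fun a _ => hfac a), Finset.prod_mul_distrib,
        Finset.prod_ite_eq' Finset.univ i (fun _ => y i)]
      simp only [Finset.mem_univ, if_pos]
      ring
  rw [Finset.sum_congr rfl (fun i (_ : i ∈ Finset.univ) => key i), ← Finset.sum_mul]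
  rw [← Nat.cast_sum, deg_eq h hv]

noncomputable def cproj {n : ℕ} (i : Fin n) : (Fin n → ℝ) →L[ℝ] ℂ :=
  Complex.ofRealCLM.comp (ContinuousLinearMap.proj i)

noncomputable def gradCLM {n : ℕ} (F : MvPolynomial (Fin n) ℂ) (x : Fin n → ℝ) :
    (Fin n → ℝ) →L[ℝ] ℂ :=
  ∑ i, pev (pderiv i F) x • cproj i

@[simp] lemma cproj_apply {n : ℕ} (i : Fin n) (v : Fin n → ℝ) : cproj i v = (v i : ℂ) := rfl

lemma gradCLM_apply {n : ℕ} (F : MvPolynomial (Fin n) ℂ) (x : Fin n → ℝ) (v : Fin n → ℝ) :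
    gradCLM F x v = ∑ i, pev (pderiv i F) x * (v i : ℂ) := by
  simp [gradCLM, ContinuousLinearMap.sum_apply, smul_eq_mul]

lemma hasFDerivAt_pev {n : ℕ} (F : MvPolynomial (Fin n) ℂ) (x : Fin n → ℝ) :
    HasFDerivAt (pev F) (gradCLM F x) x := by
  induction F using MvPolynomial.induction_on with
  | C a =>
      have : pev (C a : MvPolynomial (Fin n) ℂ) = fun _ => a := by
        funext y; simp [pev]
      rw [this]
      have hg : gradCLM (C a : MvPolynomial (Fin n) ℂ) x = 0 := by
        simp only [gradCLM, pderiv_C]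
        refine Finset.sum_eq_zero fun i _ => ?_
        have : pev (0 : MvPolynomial (Fin n) ℂ) x = 0 := by simp [pev]
        rw [this]
        ext v
        simp
      rw [hg]
      exact hasFDerivAt_const a x
  | add p q hp hq =>
      have : pev (p + q) = fun y => pev p y + pev q y := by
        funext y; simp [pev]
      rw [this]
      have hg : gradCLM (p + q) x = gradCLM p x + gradCLM q x := by
        simp only [gradCLM, map_add]
        rw [← Finset.sum_add_distrib]
        refine Finset.sum_congr rfl fun i _ => ?_
        have : pev (pderiv i p + pderiv i q) x = pev (pderiv i p) x + pev (pderiv i q) x := by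
          simp [pev]
        rw [this]
        ext v
        simp [add_mul]
      rw [hg]
      exact hp.add hq
  | mul_X p i hp =>
      have heq : pev (p * X i) = fun y => pev p y * (y i : ℂ) := by
        funext y; simp [pev]
      rw [heq]
      have hXi : HasFDerivAt (fun y : Fin n → ℝ => (y i : ℂ)) (cproj i) x :=
        (cproj i).hasFDerivAt
      have := hp.mul hXi
      refine this.congr_fderiv (Eq.symm ?_)
      apply ContinuousLinearMap.ext
      intro v
      simp only [gradCLM_apply, ContinuousLinearMap.add_apply, ContinuousLinearMap.smul_apply,
        gradCLM_apply, cproj_apply, smul_eq_mul]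
      have hterm : ∀ j : Fin n, pev (pderiv j (p * X i)) x =
          pev (pderiv j p) x * (x i : ℂ) + pev p x * (if j = i then 1 else 0) := by
        intro j
        rw [pderiv_mul]
        rcases eq_or_ne j i with rfl | hne
        · simp [pev, pderiv_X_self]
        · simp [pev, pderiv_X_of_ne (Ne.symm hne), hne]
      simp only [hterm]
      rw [Finset.sum_congr rfl (fun j (_ : j ∈ Finset.univ) =>
        (add_mul _ _ ((v j : ℝ) : ℂ))), Finset.sum_add_distrib, add_comm]
      congr 1
      · rw [Finset.sum_eq_single i]
        · simp
        · intro b _ hb; simp [hb]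
        · intro hi; exact absurd (Finset.mem_univ i) hi
      · rw [Finset.mul_sum]
        refine Finset.sum_congr rfl fun j _ => ?_
        ring

noncomputable def dotC {n : ℕ} (y : Fin n → ℝ) : (Fin n → ℝ) →L[ℝ] ℂ :=
  ∑ j, ((y j : ℂ)) • cproj j

noncomputable def Cc {n : ℕ} (y : Fin n → ℝ) : ℂ :=
  (((Real.sqrt (∑ l, y l ^ 2))⁻¹ : ℝ) : ℂ)

lemma dotC_apply {n : ℕ} (y v : Fin n → ℝ) : dotC y v = ∑ j, (y j : ℂ) * (v j : ℂ) := by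
  simp [dotC, ContinuousLinearMap.sum_apply, smul_eq_mul]

lemma dotC_single {n : ℕ} (y : Fin n → ℝ) (i : Fin n) :
    dotC y (Pi.single i 1) = (y i : ℂ) := by
  rw [dotC_apply, Finset.sum_eq_single i]
  · simp
  · intro b _ hb; simp [Pi.single_eq_of_ne hb]
  · intro hi; exact absurd (Finset.mem_univ i) hi

lemma hasFDerivAt_Cpow {n : ℕ} (d : ℕ) (y : Fin n → ℝ) (hy : 0 < ∑ l, y l ^ 2) :
    HasFDerivAt (fun x => (Cc x) ^ d) ((-(d : ℂ) * (Cc y) ^ (d + 2)) • dotC y) y := by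
  set s : (Fin n → ℝ) → ℝ := fun x => ∑ l, x l ^ 2 with hs_def
  have hr : 0 < Real.sqrt (s y) := Real.sqrt_pos.mpr hy
  -- derivative of s
  have hs : HasFDerivAt s (∑ l : Fin n, (2 * y l) •
      (ContinuousLinearMap.proj l : (Fin n → ℝ) →L[ℝ] ℝ)) y := by
    have h1 : ∀ l : Fin n, HasFDerivAt (fun x : Fin n → ℝ => x l ^ 2)
        ((2 * y l) • (ContinuousLinearMap.proj l : (Fin n → ℝ) →L[ℝ] ℝ)) y := by
      intro l
      have := (hasDerivAt_pow 2 (y l)).comp_hasFDerivAt y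
        (ContinuousLinearMap.proj l : (Fin n → ℝ) →L[ℝ] ℝ).hasFDerivAt
      simpa [Function.comp_def] using this
    exact HasFDerivAt.fun_sum fun l _ => h1 l
  -- scalar function ψ t = (sqrt t)⁻¹ ^ d
  have hψ : HasDerivAt (fun t : ℝ => (Real.sqrt t)⁻¹ ^ d)
      ((d : ℝ) * ((Real.sqrt (s y))⁻¹) ^ (d - 1) *
        (-(Real.sqrt (s y) ^ 2)⁻¹ * (1 / (2 * Real.sqrt (s y))))) (s y) := by
    have h1 : HasDerivAt Real.sqrt (1 / (2 * Real.sqrt (s y))) (s y) :=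
      Real.hasDerivAt_sqrt hy.ne'
    have h2 := h1.inv hr.ne'
    have h3 := h2.pow d
    refine h3.congr_deriv ?_
    rw [Pi.inv_apply]
    ring
  have h4 := hψ.comp_hasFDerivAt y hs
  have h5 := Complex.ofRealCLM.hasFDerivAt.comp y h4
  have heq : (fun x => (Cc x) ^ d) =
      (⇑Complex.ofRealCLM ∘ ((fun t : ℝ => (Real.sqrt t)⁻¹ ^ d) ∘ s)) := by
    funext x
    simp [Cc, Function.comp]
    rfl
  rw [heq]
  refine h5.congr_fderiv (Eq.symm ?_)
  apply ContinuousLinearMap.ext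
  intro v
  simp only [ContinuousLinearMap.smul_apply, ContinuousLinearMap.coe_comp', Function.comp_apply,
    ContinuousLinearMap.coe_sum', Finset.sum_apply, ContinuousLinearMap.proj_apply,
    Complex.ofRealCLM_apply, smul_eq_mul, dotC_apply, Complex.real_smul]
  rw [Complex.ofReal_mul, Complex.ofReal_sum]
  push_cast
  rw [Finset.mul_sum, Finset.mul_sum]
  refine Finset.sum_congr rfl fun l _ => ?_
  have hCc : Cc y = (((Real.sqrt (s y))⁻¹ : ℝ) : ℂ) := rfl
  rw [hCc]
  have hrne : (Real.sqrt (s y) : ℂ) ≠ 0 := by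
    exact_mod_cast (ne_of_gt (by exact_mod_cast hr))
  push_cast
  cases d with
  | zero => simp
  | succ k =>
      field_simp
      have h3 : ((Real.sqrt (s y) : ℂ)) ^ 3 * (1 / (Real.sqrt (s y) : ℂ)) ^ 3 = 1 := by
        rw [← mul_pow, mul_one_div_cancel hrne, one_pow]
      rw [Nat.add_sub_cancel]
      linear_combination (-((y l : ℂ) * (v l : ℂ) * (1 / (Real.sqrt (s y) : ℂ)) ^ k)) * h3

lemma gradCLM_single {n : ℕ} (F : MvPolynomial (Fin n) ℂ) (y : Fin n → ℝ) (i : Fin n) :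
    gradCLM F y (Pi.single i 1) = pev (pderiv i F) y := by
  rw [gradCLM_apply, Finset.sum_eq_single i]
  · simp
  · intro b _ hb; simp [Pi.single_eq_of_ne hb]
  · intro hi; exact absurd (Finset.mem_univ i) hi

lemma ext_eq {n d : ℕ} {F : MvPolynomial (Fin n) ℂ} (h : F.IsHomogeneous d) :
    _root_.ext F = fun x => Cc x ^ d * pev F x := by
  funext x
  show eval (fun j => (((Real.sqrt (∑ l, x l ^ 2))⁻¹ * x j : ℝ) : ℂ)) F = _
  have := eval_mul_smul h (((Real.sqrt (∑ l, x l ^ 2))⁻¹ : ℝ) : ℂ) (fun j => (x j : ℂ))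
  rw [show (fun j => (((Real.sqrt (∑ l, x l ^ 2))⁻¹ * x j : ℝ) : ℂ)) =
      (fun j => (((Real.sqrt (∑ l, x l ^ 2))⁻¹ : ℝ) : ℂ) * (x j : ℂ)) from
    funext fun j => by push_cast; ring, this]
  rfl

lemma hasFDerivAt_ext {n d : ℕ} {F : MvPolynomial (Fin n) ℂ} (h : F.IsHomogeneous d)
    (y : Fin n → ℝ) (hy : 0 < ∑ l, y l ^ 2) :
    HasFDerivAt (_root_.ext F)
      ((Cc y ^ d) • gradCLM F y + pev F y • ((-(d : ℂ) * (Cc y) ^ (d + 2)) • dotC y)) y := by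
  rw [ext_eq h]
  exact (hasFDerivAt_Cpow d y hy).mul (hasFDerivAt_pev F y)

lemma fderiv_ext_single {n d : ℕ} {F : MvPolynomial (Fin n) ℂ} (h : F.IsHomogeneous d)
    (i : Fin n) (y : Fin n → ℝ) (hy : 0 < ∑ l, y l ^ 2) :
    fderiv ℝ (_root_.ext F) y (Pi.single i 1) =
      Cc y ^ d * pev (pderiv i F) y -
        (d : ℂ) * ((Cc y) ^ (d + 2) * ((y i : ℂ) * pev F y)) := by
  rw [(hasFDerivAt_ext h y hy).fderiv]
  simp only [ContinuousLinearMap.add_apply, ContinuousLinearMap.smul_apply,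
    gradCLM_single, dotC_single, smul_eq_mul]
  ring

lemma lap_ext {m d : ℕ} {F : MvPolynomial (Fin (m + 1)) ℂ} (h : F.IsHomogeneous d)
    (hharm : ∑ i : Fin (m + 1), pderiv i (pderiv i F) = 0)
    (p : Fin (m + 1) → ℝ) (hp : ∑ j, p j ^ 2 = 1) :
    lap (_root_.ext F) p = -((d : ℂ) * ((d : ℂ) + (m : ℂ) - 1)) * pev F p := by
  have hp0 : 0 < ∑ l, p l ^ 2 := by rw [hp]; norm_num
  have hU : {y : Fin (m + 1) → ℝ | 0 < ∑ l, y l ^ 2} ∈ nhds p := by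
    have hopen : IsOpen {y : Fin (m + 1) → ℝ | 0 < ∑ l, y l ^ 2} := by
      have : Continuous fun y : Fin (m + 1) → ℝ => ∑ l, y l ^ 2 := by fun_prop
      exact isOpen_lt continuous_const this
    exact hopen.mem_nhds hp0
  have hCcp : Cc p = 1 := by
    unfold Cc; rw [hp, Real.sqrt_one]; norm_num
  have hval : ∀ i : Fin (m + 1),
      fderiv ℝ (fun y => fderiv ℝ (_root_.ext F) y (Pi.single i 1)) p (Pi.single i 1) =
        (pev (pderiv i (pderiv i F)) p - (d : ℂ) * ((p i : ℂ) * pev (pderiv i F) p)) -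
          (d : ℂ) * (((p i : ℂ) * pev (pderiv i F) p + pev F p) -
            ((d : ℂ) + 2) * ((p i : ℂ) ^ 2 * pev F p)) := by
    intro i
    have hEv : (fun y => fderiv ℝ (_root_.ext F) y (Pi.single i 1)) =ᶠ[nhds p]
        (fun y => Cc y ^ d * pev (pderiv i F) y -
          (d : ℂ) * ((Cc y) ^ (d + 2) * ((y i : ℂ) * pev F y))) :=
      Filter.eventually_of_mem hU fun y hy => fderiv_ext_single h i y hy
    rw [hEv.fderiv_eq]
    have hA := (hasFDerivAt_Cpow d p hp0).mul (hasFDerivAt_pev (pderiv i F) p)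
    have hcoord : HasFDerivAt (fun y : Fin (m + 1) → ℝ => ((y i : ℝ) : ℂ)) (cproj i) p :=
      (cproj i).hasFDerivAt
    have hB := hcoord.mul (hasFDerivAt_pev F p)
    have hC := (hasFDerivAt_Cpow (d + 2) p hp0).mul hB
    have hD := hA.sub (hC.const_mul (d : ℂ))
    rw [HasFDerivAt.fderiv (f := fun y => Cc y ^ d * pev (pderiv i F) y -
      (d : ℂ) * ((Cc y) ^ (d + 2) * ((y i : ℂ) * pev F y))) hD]
    simp only [ContinuousLinearMap.sub_apply, ContinuousLinearMap.add_apply,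
      ContinuousLinearMap.smul_apply, gradCLM_single, dotC_single, cproj_apply,
      Pi.single_eq_same, hCcp, smul_eq_mul, Pi.mul_apply]
    push_cast
    ring
  have hsum2 : ∑ i, pev (pderiv i (pderiv i F)) p = 0 := by
    have : ∑ i, pev (pderiv i (pderiv i F)) p =
        eval (fun j => ((p j : ℝ) : ℂ)) (∑ i, pderiv i (pderiv i F)) := by
      rw [map_sum]; rfl
    rw [this, hharm, map_zero]
  have heuler : ∑ i, (p i : ℂ) * pev (pderiv i F) p = (d : ℂ) * pev F p :=
    euler_eval h fun j => ((p j : ℝ) : ℂ)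
  have hsq : ∑ i, ((p i : ℂ)) ^ 2 = 1 := by
    have : ∑ i, ((p i : ℂ)) ^ 2 = (((∑ i, p i ^ 2 : ℝ)) : ℂ) := by push_cast; rfl
    rw [this, hp, Complex.ofReal_one]
  unfold lap
  rw [Finset.sum_congr rfl fun i _ => hval i]
  have hexp : ∀ i : Fin (m + 1),
      (pev (pderiv i (pderiv i F)) p - (d : ℂ) * ((p i : ℂ) * pev (pderiv i F) p)) -
        (d : ℂ) * (((p i : ℂ) * pev (pderiv i F) p + pev F p) -
          ((d : ℂ) + 2) * ((p i : ℂ) ^ 2 * pev F p)) =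
      pev (pderiv i (pderiv i F)) p + (-2 * (d : ℂ)) * ((p i : ℂ) * pev (pderiv i F) p) +
        (-(d : ℂ) * pev F p) + ((d : ℂ) * ((d : ℂ) + 2) * pev F p) * ((p i : ℂ)) ^ 2 := by
    intro i; ring
  rw [Finset.sum_congr rfl fun i _ => hexp i]
  rw [Finset.sum_add_distrib, Finset.sum_add_distrib, Finset.sum_add_distrib,
    ← Finset.mul_sum, ← Finset.mul_sum, ← Finset.mul_sum, Finset.sum_const, Finset.card_univ,
    Fintype.card_fin, hsum2, heuler, hsq]
  simp only [nsmul_eq_mul]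
  push_cast
  ring

lemma tang_prod {m d : ℕ} {F₁ F₂ : MvPolynomial (Fin (m + 1)) ℂ}
    (hhom₁ : F₁.IsHomogeneous d) (hhom₂ : F₂.IsHomogeneous d)
    (hiso : ∀ x : Fin (m + 1) → ℝ, ∑ i, pgrad F₁ x i * pgrad F₂ x i = 0)
    (p : Fin (m + 1) → ℝ) (hp : ∑ j, p j ^ 2 = 1) :
    ∑ i, ptang F₁ p i * ptang F₂ p i = -(d : ℂ) ^ 2 * pev F₁ p * pev F₂ p := by
  have heuler₁ : ∑ j, (p j : ℂ) * pgrad F₁ p j = (d : ℂ) * pev F₁ p :=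
    euler_eval hhom₁ fun j => ((p j : ℝ) : ℂ)
  have heuler₂ : ∑ j, (p j : ℂ) * pgrad F₂ p j = (d : ℂ) * pev F₂ p :=
    euler_eval hhom₂ fun j => ((p j : ℝ) : ℂ)
  have hsq : ∑ i, ((p i : ℂ)) ^ 2 = 1 := by
    have : ∑ i, ((p i : ℂ)) ^ 2 = (((∑ i, p i ^ 2 : ℝ)) : ℂ) := by push_cast; rfl
    rw [this, hp, Complex.ofReal_one]
  have hexp : ∀ i : Fin (m + 1), ptang F₁ p i * ptang F₂ p i =
      pgrad F₁ p i * pgrad F₂ p i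
        - ((d : ℂ) * pev F₂ p) * ((p i : ℂ) * pgrad F₁ p i)
        - ((d : ℂ) * pev F₁ p) * ((p i : ℂ) * pgrad F₂ p i)
        + (((d : ℂ) * pev F₁ p) * ((d : ℂ) * pev F₂ p)) * ((p i : ℂ)) ^ 2 := by
    intro i
    unfold ptang
    rw [heuler₁, heuler₂]
    ring
  rw [Finset.sum_congr rfl fun i _ => hexp i]
  rw [Finset.sum_add_distrib, Finset.sum_sub_distrib, Finset.sum_sub_distrib,
    ← Finset.mul_sum, ← Finset.mul_sum, ← Finset.mul_sum,
    hiso p, heuler₁, heuler₂, hsq]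
  ring

/-- If `F₁, F₂` are harmonic homogeneous polynomials of degree `d` on `ℝ^{m+1}` with
`(∇ₓF₁)ᵀ∇ₓF₂ = 0` everywhere, then the restrictions `fᵢ = Fᵢ|_{S^m}` satisfy
`Δ_{S^m} fᵢ = -d(d+m-1) fᵢ` and `g_ℂ(∇^{S^m}f₁, ∇^{S^m}f₂) = -d² f₁f₂`. -/
theorem stmt9 {m : ℕ} (d : ℕ) (F₁ F₂ : MvPolynomial (Fin (m + 1)) ℂ)
    (hhom₁ : F₁.IsHomogeneous d) (hhom₂ : F₂.IsHomogeneous d)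
    (hharm₁ : ∑ i : Fin (m + 1), pderiv i (pderiv i F₁) = 0)
    (hharm₂ : ∑ i : Fin (m + 1), pderiv i (pderiv i F₂) = 0)
    (hiso : ∀ x : Fin (m + 1) → ℝ, ∑ i, pgrad F₁ x i * pgrad F₂ x i = 0) :
    (∀ p : Fin (m + 1) → ℝ, ∑ j, p j ^ 2 = 1 →
        lap (ext F₁) p = -((d : ℂ) * ((d : ℂ) + (m : ℂ) - 1)) * pev F₁ p ∧
        lap (ext F₂) p = -((d : ℂ) * ((d : ℂ) + (m : ℂ) - 1)) * pev F₂ p) ∧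
    (∀ p : Fin (m + 1) → ℝ, ∑ j, p j ^ 2 = 1 →
        ∑ i, ptang F₁ p i * ptang F₂ p i = -(d : ℂ) ^ 2 * pev F₁ p * pev F₂ p) := by
  constructor
  · intro p hp
    exact ⟨lap_ext hhom₁ hharm₁ p hp, lap_ext hhom₂ hharm₂ p hp⟩
  · intro p hp
    exact tang_prod hhom₁ hhom₂ hiso p hp
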